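/- Every solution of the host–parasite ecological model starting in the nonnegative quadrant is eventually bounded by the compact set [0, K₁] × [0, K₂(r₂ + e/h)/r₂]: if t ↦ (x₁(t), x₂(t)) is a solution on [0, ∞) with x₁(0) ≥ 0 and x₂(0) ≥ 0, then limsup_{t→∞} x₁(t) ≤ K₁ and limsup_{t→∞} x₂(t) ≤ K₂(r₂ + e/h)/r₂. -/

import Mathlib

open Set Filter

/-- Grönwall: a solution of `x' = x * g` with `x T = 0` stays zero. -/
lemma ode_zero_on (x g : ℝ → ℝ) (T τ : ℝ)
    (hx : ∀ t ∈ Icc T τ, HasDerivAt x (x t * g t) t)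
    (hg : ContinuousOn g (Icc T τ)) (h0 : x T = 0) :
    ∀ t ∈ Icc T τ, x t = 0 := by
  obtain ⟨L, hL⟩ := isCompact_Icc.exists_bound_of_continuousOn hg
  have hcont : ContinuousOn x (Icc T τ) := fun t ht =>
    ((hx t ht).continuousAt).continuousWithinAt
  have key := norm_le_gronwallBound_of_norm_deriv_right_le (f := x)
    (f' := fun t => x t * g t) (δ := 0) (K := L) (ε := 0) hcont
    (fun t ht => (hx t (Ico_subset_Icc_self ht)).hasDerivWithinAt)
    (by simp [h0]) ?_
  · intro t ht
    have := key t ht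
    rw [gronwallBound_ε0_δ0] at this
    exact norm_le_zero_iff.mp this
  · intro t ht
    have h1 : ‖x t * g t‖ = ‖g t‖ * ‖x t‖ := by rw [norm_mul]; ring
    rw [h1, add_zero]
    exact mul_le_mul_of_nonneg_right (hL t (Ico_subset_Icc_self ht)) (norm_nonneg _)

/-- Nonnegativity invariance for `x' = x * g`. -/
lemma ode_nonneg (x g : ℝ → ℝ)
    (hx : ∀ t, 0 ≤ t → HasDerivAt x (x t * g t) t)
    (hg : ∀ T, 0 ≤ T → x T = 0 → ∃ τ, T < τ ∧ ContinuousOn g (Icc T τ))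
    (h0 : 0 ≤ x 0) : ∀ t, 0 ≤ t → 0 ≤ x t := by
  by_contra hcon
  push_neg at hcon
  obtain ⟨t₁, ht₁, hneg⟩ := hcon
  set S : Set ℝ := {t | t ∈ Icc 0 t₁ ∧ 0 ≤ x t} with hSdef
  have hcx : ContinuousOn x (Icc 0 t₁) := fun t ht =>
    ((hx t ht.1).continuousAt).continuousWithinAt
  have hScl : IsClosed S :=
    hcx.preimage_isClosed_of_isClosed isClosed_Icc isClosed_Ici
  have hScomp : IsCompact S :=
    isCompact_Icc.of_isClosed_subset hScl (fun t ht => ht.1)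
  have hSne : S.Nonempty := ⟨0, ⟨le_refl 0, ht₁⟩, h0⟩
  have hTmem : sSup S ∈ S := hScomp.sSup_mem hSne
  set T := sSup S with hT
  have hT0 : 0 ≤ T := hTmem.1.1
  have hTt₁ : T ≤ t₁ := hTmem.1.2
  have hgtT : ∀ t, T < t → t ≤ t₁ → x t < 0 := by
    intro t hTt htt₁
    by_contra hge
    push_neg at hge
    have : t ∈ S := ⟨⟨le_trans hT0 hTt.le, htt₁⟩, hge⟩
    exact absurd (le_csSup hScomp.bddAbove this) (not_le.mpr hTt)
  have hTlt : T < t₁ := hTt₁.lt_of_ne (by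
    intro hEq
    have h2 := hTmem.2
    rw [hEq] at h2
    exact absurd h2 (not_le.mpr hneg))
  have hxT : x T = 0 := by
    rcases lt_or_eq_of_le hTmem.2 with hpos | hEq
    · -- x T > 0: continuity gives a point of S beyond T, contradiction
      exfalso
      have hca : ContinuousAt x T := (hx T hT0).continuousAt
      have hev : ∀ᶠ s in nhds T, 0 < x s := hca.eventually (eventually_gt_nhds hpos)
      rw [Metric.eventually_nhds_iff] at hev
      obtain ⟨δ, hδ, hball⟩ := hev
      set t := min (T + δ / 2) t₁ with htdef
      have htT : T < t := lt_min (by linarith) hTlt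
      have hxt : 0 < x t := hball (by
        rw [Real.dist_eq, abs_lt]
        constructor
        · have : T ≤ t := htT.le
          linarith
        · have : t ≤ T + δ / 2 := min_le_left _ _
          linarith)
      exact absurd (hgtT t htT (min_le_right _ _)) (not_lt.mpr hxt.le)
    · exact hEq.symm
  obtain ⟨τ, hτT, hτcont⟩ := hg T hT0 hxT
  set τ' := min τ t₁ with hτ'
  have hτ'T : T < τ' := lt_min hτT hTlt
  have hzero := ode_zero_on x g T τ'
    (fun t ht => hx t (le_trans hT0 ht.1))
    (hτcont.mono (Icc_subset_Icc le_rfl (min_le_left _ _))) hxT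
  have := hzero τ' ⟨hτ'T.le, le_refl _⟩
  have := hgtT τ' hτ'T (min_le_right _ _)
  linarith

/-- Logistic comparison: if `y ≥ 0` and `y' ≤ y (c - b y)` on `[0,∞)` then
`limsup y ≤ c / b`. -/
lemma ode_limsup_le (y F : ℝ → ℝ) (b c : ℝ) (hb : 0 < b) (hc : 0 < c)
    (hy : ∀ t, 0 ≤ t → HasDerivAt y (F t) t)
    (hF : ∀ t, 0 ≤ t → F t ≤ y t * (c - b * y t))
    (hpos : ∀ t, 0 ≤ t → 0 ≤ y t) :
    limsup y atTop ≤ c / b := by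
  have hcb : IsCoboundedUnder (· ≤ ·) atTop y :=
    isCoboundedUnder_le_of_eventually_le atTop (x := 0)
      ((eventually_ge_atTop 0).mono (fun t ht => hpos t ht))
  refine le_of_forall_pos_le_add (fun ε hε => ?_)
  set M := c / b + ε with hM
  have hMpos : 0 < M := by positivity
  have hcbM : c - b * M = -(b * ε) := by rw [hM]; field_simp; ring
  -- Part B : some point where y ≤ M
  have hB : ∃ t₀, 0 ≤ t₀ ∧ y t₀ ≤ M := by
    by_contra hcon
    push_neg at hcon
    set C := b * ε * M with hC
    have hCpos : 0 < C := by positivity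
    set u : ℝ → ℝ := fun t => y t + C * t with hu
    have hud : ∀ t, 0 ≤ t → HasDerivAt u (F t + C) t := by
      intro t ht
      exact ((hy t ht).add ((hasDerivAt_id t).const_mul C)).congr_deriv (by simp)
    have hanti : AntitoneOn u (Ici 0) := by
      apply antitoneOn_of_deriv_nonpos (convex_Ici 0)
      · intro t ht
        exact ((hud t ht).continuousAt).continuousWithinAt
      · intro t ht
        rw [interior_Ici] at ht
        exact ((hud t ht.le).differentiableAt).differentiableWithinAt
      · intro t ht
        rw [interior_Ici] at ht
        rw [(hud t ht.le).deriv]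
        have hyt := (hcon t ht.le)
        have h1 : F t ≤ y t * (c - b * y t) := hF t ht.le
        have h2 : y t * (c - b * y t) ≤ M * (c - b * y t) := by
          apply mul_le_mul_of_nonpos_right hyt.le
          nlinarith
        have h3 : M * (c - b * y t) ≤ M * (-(b * ε)) := by
          apply mul_le_mul_of_nonneg_left _ hMpos.le
          nlinarith
        nlinarith
    set t := y 0 / C + 1 with ht
    have ht0 : (0:ℝ) ≤ t := by
      have := hpos 0 le_rfl
      positivity
    have := hanti (mem_Ici.mpr le_rfl) ht0 ht0
    have hut : y t + C * t ≤ y 0 := by simpa [hu] using this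
    have hCt : C * t = y 0 + C := by rw [ht]; field_simp
    have := hpos t ht0
    have := hcon t ht0
    nlinarith
  obtain ⟨t₀, ht₀, hyt₀⟩ := hB
  -- Part A : invariance of {y ≤ M} forward in time
  have hA : ∀ t₁, t₀ ≤ t₁ → y t₁ ≤ M := by
    intro t₁ ht₁
    by_contra hgt
    push_neg at hgt
    set S : Set ℝ := {t | t ∈ Icc t₀ t₁ ∧ y t ≤ M} with hSdef
    have hcy : ContinuousOn y (Icc t₀ t₁) := fun t ht =>
      ((hy t (le_trans ht₀ ht.1)).continuousAt).continuousWithinAt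
    have hScl : IsClosed S :=
      hcy.preimage_isClosed_of_isClosed isClosed_Icc isClosed_Iic
    have hScomp : IsCompact S :=
      isCompact_Icc.of_isClosed_subset hScl (fun t ht => ht.1)
    have hSne : S.Nonempty := ⟨t₀, ⟨le_refl _, ht₁⟩, hyt₀⟩
    have hsmem : sSup S ∈ S := hScomp.sSup_mem hSne
    set s := sSup S with hs
    have hst₁ : s ≤ t₁ := hsmem.1.2
    have hs0 : t₀ ≤ s := hsmem.1.1
    have hbig : ∀ t, s < t → t ≤ t₁ → M < y t := by
      intro t hst htt₁
      by_contra hle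
      push_neg at hle
      have : t ∈ S := ⟨⟨le_trans hs0 hst.le, htt₁⟩, hle⟩
      exact absurd (le_csSup hScomp.bddAbove this) (not_le.mpr hst)
    have hslt : s < t₁ := hst₁.lt_of_ne (by
      intro hEq
      have h2 := hsmem.2
      rw [hEq] at h2
      exact absurd h2 (not_le.mpr hgt))
    have hanti : AntitoneOn y (Icc s t₁) := by
      apply antitoneOn_of_deriv_nonpos (convex_Icc s t₁)
      · exact hcy.mono (Icc_subset_Icc hs0 le_rfl)
      · intro t ht
        rw [interior_Icc] at ht
        exact ((hy t (le_trans (le_trans ht₀ hs0) ht.1.le)).differentiableAt).differentiableWithinAt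
      · intro t ht
        rw [interior_Icc] at ht
        have htge : 0 ≤ t := le_trans (le_trans ht₀ hs0) ht.1.le
        rw [(hy t htge).deriv]
        have h1 : F t ≤ y t * (c - b * y t) := hF t htge
        have h2 : M < y t := hbig t ht.1 ht.2.le
        have h3 : 0 ≤ y t := hpos t htge
        have h4 : c - b * y t ≤ 0 := by nlinarith [mul_lt_mul_of_pos_left h2 hb]
        have h5 : y t * (c - b * y t) ≤ 0 := mul_nonpos_of_nonneg_of_nonpos h3 h4
        linarith
    have := hanti ⟨le_refl _, hslt.le⟩ ⟨hslt.le, le_refl _⟩ hslt.le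
    have h2 := hsmem.2
    linarith
  exact limsup_le_of_le hcb ((eventually_ge_atTop t₀).mono hA)

/-- Eventual boundedness: every solution of the host–parasite ecological
model starting in the nonnegative quadrant satisfies
  limsup_{t→∞} x₁(t) ≤ K₁ and limsup_{t→∞} x₂(t) ≤ K₂(r₂ + e/h)/r₂. -/
theorem hostParasite_eventually_bounded
    (r₁ r₂ K₁ K₂ a h e d : ℝ)
    (hr₁ : 0 < r₁) (hr₂ : 0 < r₂) (hK₁ : 0 < K₁) (hK₂ : 0 < K₂)
    (ha : 0 < a) (hh : 0 < h) (he : 0 < e) (hd : 0 ≤ d)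
    (x₁ x₂ : ℝ → ℝ)
    (hx₁ : ∀ t : ℝ, 0 ≤ t →
      HasDerivAt x₁ (x₁ t * (r₁ * (1 - x₁ t / K₁) - a * x₂ t / (1 + h * a * x₁ t))) t)
    (hx₂ : ∀ t : ℝ, 0 ≤ t →
      HasDerivAt x₂ (x₂ t * (e * a * x₁ t / (1 + h * a * x₁ t) - d + r₂ * (1 - x₂ t / K₂))) t)
    (hx₁0 : 0 ≤ x₁ 0) (hx₂0 : 0 ≤ x₂ 0) :
    Filter.limsup x₁ Filter.atTop ≤ K₁ ∧
    Filter.limsup x₂ Filter.atTop ≤ K₂ * (r₂ + e / h) / r₂ := by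
  -- Nonnegativity of x₁
  have hx₁nn : ∀ t, 0 ≤ t → 0 ≤ x₁ t := by
    refine ode_nonneg x₁
      (fun t => r₁ * (1 - x₁ t / K₁) - a * x₂ t / (1 + h * a * x₁ t)) hx₁ ?_ hx₁0
    intro T hT hxT
    have hca : ContinuousAt x₁ T := (hx₁ T hT).continuousAt
    have hφ : ContinuousAt (fun t => 1 + h * a * x₁ t) T :=
      (continuousAt_const.add (continuousAt_const.mul hca))
    have hφT : (0:ℝ) < 1 + h * a * x₁ T := by rw [hxT]; norm_num
    have hev : ∀ᶠ s in nhds T, 0 < 1 + h * a * x₁ s :=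
      hφ.eventually (eventually_gt_nhds hφT)
    rw [Metric.eventually_nhds_iff] at hev
    obtain ⟨δ, hδ, hball⟩ := hev
    refine ⟨T + δ / 2, by linarith, ?_⟩
    have hden : ∀ t ∈ Icc T (T + δ / 2), (0:ℝ) < 1 + h * a * x₁ t := by
      intro t ht
      apply hball
      rw [Real.dist_eq, abs_lt]
      constructor <;> [linarith [ht.1]; linarith [ht.2]]
    have hc1 : ContinuousOn x₁ (Icc T (T + δ / 2)) := fun t ht =>
      ((hx₁ t (hT.trans ht.1)).continuousAt).continuousWithinAt
    have hc2 : ContinuousOn x₂ (Icc T (T + δ / 2)) := fun t ht =>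
      ((hx₂ t (hT.trans ht.1)).continuousAt).continuousWithinAt
    exact (continuousOn_const.mul (continuousOn_const.sub (hc1.div_const K₁))).sub
      ((continuousOn_const.mul hc2).div
        (continuousOn_const.add (continuousOn_const.mul hc1))
        (fun t ht => (hden t ht).ne'))
  have hdenpos : ∀ t, 0 ≤ t → (0:ℝ) < 1 + h * a * x₁ t := by
    intro t ht
    have h1 := hx₁nn t ht
    nlinarith [mul_nonneg (mul_nonneg hh.le ha.le) h1]
  -- Nonnegativity of x₂
  have hx₂nn : ∀ t, 0 ≤ t → 0 ≤ x₂ t := by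
    refine ode_nonneg x₂
      (fun t => e * a * x₁ t / (1 + h * a * x₁ t) - d + r₂ * (1 - x₂ t / K₂)) hx₂ ?_ hx₂0
    intro T hT _
    refine ⟨T + 1, by linarith, ?_⟩
    have hc1 : ContinuousOn x₁ (Icc T (T + 1)) := fun t ht =>
      ((hx₁ t (hT.trans ht.1)).continuousAt).continuousWithinAt
    have hc2 : ContinuousOn x₂ (Icc T (T + 1)) := fun t ht =>
      ((hx₂ t (hT.trans ht.1)).continuousAt).continuousWithinAt
    exact (((continuousOn_const.mul hc1).div
        (continuousOn_const.add (continuousOn_const.mul hc1))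
        (fun t ht => (hdenpos t (hT.trans ht.1)).ne')).sub continuousOn_const).add
      (continuousOn_const.mul (continuousOn_const.sub (hc2.div_const K₂)))
  constructor
  · -- limsup x₁ ≤ K₁
    have hlim := ode_limsup_le x₁
      (fun t => x₁ t * (r₁ * (1 - x₁ t / K₁) - a * x₂ t / (1 + h * a * x₁ t)))
      (r₁ / K₁) r₁ (by positivity) hr₁ hx₁ ?_ hx₁nn
    · have hEq : r₁ / (r₁ / K₁) = K₁ := by field_simp
      rwa [hEq] at hlim
    · intro t ht
      have h1 := hx₁nn t ht
      have h2 := hx₂nn t ht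
      have hden := hdenpos t ht
      have h3 : 0 ≤ a * x₂ t / (1 + h * a * x₁ t) := div_nonneg (by positivity) hden.le
      apply mul_le_mul_of_nonneg_left _ h1
      have h4 : r₁ * (1 - x₁ t / K₁) = r₁ - r₁ / K₁ * x₁ t := by field_simp
      linarith
  · -- limsup x₂ ≤ K₂ (r₂ + e/h) / r₂
    have hlim := ode_limsup_le x₂
      (fun t => x₂ t * (e * a * x₁ t / (1 + h * a * x₁ t) - d + r₂ * (1 - x₂ t / K₂)))
      (r₂ / K₂) (r₂ + e / h) (by positivity) (by positivity) hx₂ ?_ hx₂nn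
    · have hEq : (r₂ + e / h) / (r₂ / K₂) = K₂ * (r₂ + e / h) / r₂ := by
        field_simp
      rwa [hEq] at hlim
    · intro t ht
      have h1 := hx₁nn t ht
      have h2 := hx₂nn t ht
      have hden := hdenpos t ht
      have hq : e * a * x₁ t / (1 + h * a * x₁ t) ≤ e / h := by
        rw [div_le_div_iff₀ hden hh]
        nlinarith
      apply mul_le_mul_of_nonneg_left _ h2
      have h4 : r₂ * (1 - x₂ t / K₂) = r₂ - r₂ / K₂ * x₂ t := by field_simp
      linarith
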